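/- Let p be a positive probability vector in R^k, let p_max = max_j p_j, and define α_min(p) = 1 − p_max^{−1/3} / (Σ_j p_j^{2/3}). Then for every α with α_min(p) ≤ α ≤ 1, the vector q* with q*_j = p_j^{2/3}/(Σ_ℓ p_ℓ^{2/3}) satisfies q*_j ≥ (1−α) p_j for all j, and hence the minimum of S_p(q) = Σ_j p_j/sqrt(q_j) over {q in the simplex : q_j ≥ (1−α)p_j ∀j} equals (Σ_j p_j^{2/3})^{3/2}. -/

import Mathlib

open Finset

/-- Threshold budget: for `α ≥ α_min(p) = 1 - p_max^(-1/3)/∑ j, (p j)^(2/3)`, the fully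
active optimizer `q* j = (p j)^(2/3)/∑ ℓ (p ℓ)^(2/3)` is feasible for the α-budgeted
problem, and the constrained minimum of `S_p` equals `(∑ j, (p j)^(2/3))^(3/2)`. -/
theorem threshold_budget {k : ℕ} (hk : 0 < k) (p : Fin k → ℝ)
    (hp : ∀ j, 0 < p j) (hpsum : ∑ j, p j = 1) (α : ℝ)
    (hαmin : 1 - ((Finset.univ.sup' (Finset.univ_nonempty_iff.mpr
        (Fin.pos_iff_nonempty.mp hk)) p) ^ (-(1:ℝ)/3)) / (∑ j, (p j) ^ ((2:ℝ)/3)) ≤ α)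
    (hα1 : α ≤ 1) :
    let q : Fin k → ℝ := fun j => (p j) ^ ((2:ℝ)/3) / ∑ ℓ, (p ℓ) ^ ((2:ℝ)/3)
    (∀ j, (1 - α) * p j ≤ q j) ∧
    (∀ q' : Fin k → ℝ, (∀ j, 0 < q' j) → (∑ j, q' j = 1) →
      (∀ j, (1 - α) * p j ≤ q' j) →
      (∑ j, (p j) ^ ((2:ℝ)/3)) ^ ((3:ℝ)/2) ≤ ∑ j, p j / Real.sqrt (q' j)) ∧
    (∑ j, p j / Real.sqrt (q j)) = (∑ j, (p j) ^ ((2:ℝ)/3)) ^ ((3:ℝ)/2) := by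
  intro q
  set ne : (Finset.univ : Finset (Fin k)).Nonempty :=
    Finset.univ_nonempty_iff.mpr (Fin.pos_iff_nonempty.mp hk)
  set M : ℝ := Finset.univ.sup' ne p with hM
  set S : ℝ := ∑ j, (p j) ^ ((2:ℝ)/3) with hS
  have hSpos : 0 < S := Finset.sum_pos (fun j _ => Real.rpow_pos_of_pos (hp j) _)
    (Finset.univ_nonempty_iff.mpr (Fin.pos_iff_nonempty.mp hk))
  have hMpos : 0 < M := lt_of_lt_of_le (hp ⟨0, hk⟩) (Finset.le_sup' p (Finset.mem_univ _))
  -- Feasibility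
  have feas : ∀ j, (1 - α) * p j ≤ q j := by
    intro j
    have h1α : 1 - α ≤ M ^ (-(1:ℝ)/3) / S := by linarith
    have hpj : 0 < p j := hp j
    have hjM : p j ≤ M := Finset.le_sup' p (Finset.mem_univ j)
    have key : M ^ (-(1:ℝ)/3) * p j ≤ p j ^ ((2:ℝ)/3) := by
      have h2 : M ^ (-(1:ℝ)/3) ≤ p j ^ (-(1:ℝ)/3) :=
        Real.rpow_le_rpow_of_nonpos hpj hjM (by norm_num)
      have h3 : p j ^ (-(1:ℝ)/3) * p j = p j ^ ((2:ℝ)/3) := by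
        rw [← Real.rpow_add_one hpj.ne']
        norm_num
      calc M ^ (-(1:ℝ)/3) * p j ≤ p j ^ (-(1:ℝ)/3) * p j := by
            exact mul_le_mul_of_nonneg_right h2 hpj.le
        _ = p j ^ ((2:ℝ)/3) := h3
    calc (1 - α) * p j ≤ (M ^ (-(1:ℝ)/3) / S) * p j :=
          mul_le_mul_of_nonneg_right h1α hpj.le
      _ = (M ^ (-(1:ℝ)/3) * p j) / S := by ring
      _ ≤ p j ^ ((2:ℝ)/3) / S := by gcongr
      _ = q j := rfl
  refine ⟨feas, ?_, ?_⟩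
  · -- lower bound by Hölder
    intro q' hq'pos hq'sum _
    have hpq : Real.HolderConjugate ((3:ℝ)/2) 3 := ⟨by norm_num, by norm_num, by norm_num⟩
    have hold := Real.inner_le_Lp_mul_Lq_of_nonneg (Finset.univ)
      (f := fun j => (p j / Real.sqrt (q' j)) ^ ((2:ℝ)/3))
      (g := fun j => (q' j) ^ ((1:ℝ)/3)) hpq
      (fun i _ => Real.rpow_nonneg (div_nonneg (hp i).le (Real.sqrt_nonneg _)) _)
      (fun i _ => Real.rpow_nonneg (hq'pos i).le _)
    have hsqrt : ∀ j, Real.sqrt (q' j) = (q' j) ^ ((1:ℝ)/2) := fun j =>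
      Real.sqrt_eq_rpow _
    have hfg : ∀ j, (p j / Real.sqrt (q' j)) ^ ((2:ℝ)/3) * (q' j) ^ ((1:ℝ)/3)
        = p j ^ ((2:ℝ)/3) := by
      intro j
      rw [hsqrt, Real.div_rpow (hp j).le (Real.rpow_nonneg (hq'pos j).le _),
        ← Real.rpow_mul (hq'pos j).le]
      rw [div_mul_eq_mul_div, div_eq_iff (Real.rpow_pos_of_pos (hq'pos j) _).ne']
      norm_num
    have hf32 : ∀ j, ((p j / Real.sqrt (q' j)) ^ ((2:ℝ)/3)) ^ ((3:ℝ)/2)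
        = p j / Real.sqrt (q' j) := by
      intro j
      rw [← Real.rpow_mul (div_nonneg (hp j).le (Real.sqrt_nonneg _))]
      norm_num
    have hg3 : ∀ j, ((q' j) ^ ((1:ℝ)/3)) ^ (3:ℝ) = q' j := by
      intro j
      rw [← Real.rpow_mul (hq'pos j).le]; norm_num
    simp only [hfg, hf32, hg3] at hold
    rw [hq'sum] at hold
    have hone : (1:ℝ) ^ ((1:ℝ)/3) = 1 := Real.one_rpow _
    have h1 : S ≤ (∑ j, p j / Real.sqrt (q' j)) ^ ((2:ℝ)/3) := by
      have : (1:ℝ)/((3:ℝ)/2) = (2:ℝ)/3 := by norm_num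
      calc S ≤ (∑ j, p j / Real.sqrt (q' j)) ^ ((1:ℝ)/((3:ℝ)/2))
            * (1:ℝ) ^ ((1:ℝ)/3) := hold
        _ = (∑ j, p j / Real.sqrt (q' j)) ^ ((2:ℝ)/3) := by
            rw [hone, mul_one, this]
    have hsum_nonneg : 0 ≤ ∑ j, p j / Real.sqrt (q' j) :=
      Finset.sum_nonneg fun j _ => div_nonneg (hp j).le (Real.sqrt_nonneg _)
    calc S ^ ((3:ℝ)/2)
        ≤ ((∑ j, p j / Real.sqrt (q' j)) ^ ((2:ℝ)/3)) ^ ((3:ℝ)/2) :=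
          Real.rpow_le_rpow hSpos.le h1 (by norm_num)
      _ = ∑ j, p j / Real.sqrt (q' j) := by
          rw [← Real.rpow_mul hsum_nonneg]; norm_num
  · -- value at q*
    have hterm : ∀ j, p j / Real.sqrt (q j) = p j ^ ((2:ℝ)/3) * S ^ ((1:ℝ)/2) := by
      intro j
      have hqj : q j = p j ^ ((2:ℝ)/3) / S := rfl
      rw [hqj, Real.sqrt_eq_rpow, Real.div_rpow (Real.rpow_nonneg (hp j).le _) hSpos.le,
        ← Real.rpow_mul (hp j).le, show (2:ℝ)/3 * (1/2) = 1/3 by norm_num,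
        div_div_eq_mul_div, div_eq_iff (Real.rpow_pos_of_pos (hp j) _).ne',
        mul_right_comm, ← Real.rpow_add (hp j)]
      norm_num
    rw [Finset.sum_congr rfl (fun j _ => hterm j), ← Finset.sum_mul]
    rw [← hS, ← Real.rpow_one S, ← Real.rpow_mul hSpos.le, ← Real.rpow_add hSpos]
    norm_num
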